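/- Let n ≥ 1 and let Y, Z be Hermitian n×n complex matrices with tr(YZ) = 0 and tr(Y²) = tr(Z²) > 0, and set U = Y + iZ. Then equality tr([Y,Z]²) = −2·(tr(Y²)·tr(Z²) − (tr(YZ))²) holds if and only if U² = 0 and the positive semidefinite matrix U·Uᴴ has rank at most 1 (equivalently, U·Uᴴ has at most one nonzero eigenvalue). (This is the equality characterization in the proof of Proposition 3.1, identifying the tangent planes in SL(n,ℂ)/SU(n) of extremal sectional curvature −1/n.) -/

import Mathlib

open Matrix

private lemma cycA {m : ℕ} (A B C D : Matrix (Fin m) (Fin m) ℂ) :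
    (A * (B * (C * D))).trace = (B * (C * (D * A))).trace := by
  rw [trace_mul_comm]; simp only [mul_assoc]

private lemma keyid {m : ℕ} (Y Z : Matrix (Fin m) (Fin m) ℂ) :
    ((Y + Complex.I • Z) * (Y - Complex.I • Z) * (Y + Complex.I • Z) * (Y - Complex.I • Z)).trace
      - ((Y + Complex.I • Z) * (Y + Complex.I • Z) * (Y - Complex.I • Z) * (Y - Complex.I • Z)).trace
      = -2 * (((Y * Z - Z * Y) * (Y * Z - Z * Y)).trace) := by
  have c1 : (Y * (Z * (Y * Y))).trace = (Y * (Y * (Z * Y))).trace :=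
    (cycA Y Z Y Y).trans ((cycA Z Y Y Y).trans (cycA Y Y Y Z))
  have c2 : (Z * (Z * (Y * Z))).trace = (Z * (Y * (Z * Z))).trace := cycA Z Z Y Z
  have c3 : (Z * (Z * (Y * Y))).trace = (Y * (Z * (Z * Y))).trace := (cycA Y Z Z Y).symm
  have c4 : (Y * (Y * (Z * Z))).trace = (Z * (Y * (Y * Z))).trace := (cycA Z Y Y Z).symm
  have hI2 : (Complex.I : ℂ) ^ 2 = -1 := Complex.I_sq
  have hI3 : (Complex.I : ℂ) ^ 3 = -Complex.I := by rw [pow_succ, hI2]; ring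
  simp only [mul_add, add_mul, mul_sub, sub_mul, smul_mul_assoc, mul_smul_comm, smul_smul,
    Complex.I_mul_I, neg_smul, one_smul, trace_add, trace_sub, trace_smul, mul_assoc,
    trace_neg, smul_eq_mul]
  ring_nf
  rw [hI2, hI3]
  linear_combination (-2*Complex.I) * c1 + (-2*Complex.I) * c2 + 2 * c3 + 2 * c4

private lemma trace_eq_sum_eig {m : ℕ} {B : Matrix (Fin m) (Fin m) ℂ} (hB : B.IsHermitian) :
    B.trace = ∑ i, (hB.eigenvalues i : ℂ) := by
  have h1 : (star (hB.eigenvectorUnitary : Matrix (Fin m) (Fin m) ℂ)) *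
      (hB.eigenvectorUnitary : Matrix (Fin m) (Fin m) ℂ) = 1 :=
    Unitary.coe_star_mul_self _
  conv_lhs => rw [hB.spectral_theorem, Unitary.conjStarAlgAut_apply]
  rw [trace_mul_cycle, h1, one_mul, trace_diagonal]
  simp

private lemma trace_sq_eq_sum_eig {m : ℕ} {B : Matrix (Fin m) (Fin m) ℂ} (hB : B.IsHermitian) :
    (B * B).trace = ∑ i, (hB.eigenvalues i : ℂ) ^ 2 := by
  have h1 : (star (hB.eigenvectorUnitary : Matrix (Fin m) (Fin m) ℂ)) *
      (hB.eigenvectorUnitary : Matrix (Fin m) (Fin m) ℂ) = 1 :=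
    Unitary.coe_star_mul_self _
  conv_lhs => rw [hB.spectral_theorem, Unitary.conjStarAlgAut_apply]
  rw [show ∀ V D W : Matrix (Fin m) (Fin m) ℂ,
      (V * D * W) * (V * D * W) = V * D * ((W * V) * D) * W from
    fun V D W => by simp only [mul_assoc]]
  rw [h1, one_mul, trace_mul_cycle, ← mul_assoc, h1, one_mul, diagonal_mul_diagonal,
    trace_diagonal]
  simp [sq]

private lemma trace_mul_conjT {m : ℕ} (C : Matrix (Fin m) (Fin m) ℂ) :
    (C * Cᴴ).trace = ((∑ i, ∑ j, Complex.normSq (C i j) : ℝ) : ℂ) := by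
  simp only [trace, diag_apply, mul_apply, conjTranspose_apply]
  push_cast
  refine Finset.sum_congr rfl fun i _ => Finset.sum_congr rfl fun j _ => ?_
  rw [Complex.star_def, Complex.mul_conj]

private lemma normSqSum_eq_zero_iff {m : ℕ} (C : Matrix (Fin m) (Fin m) ℂ) :
    (∑ i, ∑ j, Complex.normSq (C i j) : ℝ) = 0 ↔ C = 0 := by
  rw [Finset.sum_eq_zero_iff_of_nonneg (f := fun i => ∑ j, Complex.normSq (C i j))
    (fun i _ => Finset.sum_nonneg fun j _ => Complex.normSq_nonneg _)]
  constructor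
  · intro h
    ext i j
    have := (Finset.sum_eq_zero_iff_of_nonneg (fun j _ => Complex.normSq_nonneg (C i j))).1
      (h i (Finset.mem_univ i)) j (Finset.mem_univ j)
    simpa [Complex.normSq_eq_zero] using this
  · rintro rfl; simp

private lemma cross_sum {m : ℕ} (f : Fin m → ℝ) :
    (∑ i, f i) ^ 2 = ∑ i, f i ^ 2 + ∑ i, ∑ j ∈ Finset.univ.erase i, f i * f j := by
  rw [sq, Finset.sum_mul_sum, ← Finset.sum_add_distrib]
  refine Finset.sum_congr rfl fun i _ => ?_
  rw [← Finset.add_sum_erase _ _ (Finset.mem_univ i), sq]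

private lemma card_le_one_iff_cross {m : ℕ} (f : Fin m → ℝ) (hf : ∀ i, 0 ≤ f i) :
    Fintype.card {i // f i ≠ 0} ≤ 1 ↔ ∑ i, ∑ j ∈ Finset.univ.erase i, f i * f j = 0 := by
  constructor
  · intro h
    refine Finset.sum_eq_zero fun i _ => Finset.sum_eq_zero fun j hj => ?_
    rcases eq_or_ne (f i) 0 with h1 | h1
    · rw [h1, zero_mul]
    rcases eq_or_ne (f j) 0 with h2 | h2
    · rw [h2, mul_zero]
    exact absurd (Subtype.ext_iff.1 (Fintype.card_le_one_iff.1 h ⟨i, h1⟩ ⟨j, h2⟩))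
      (Finset.ne_of_mem_erase hj).symm
  · intro h
    by_contra hc
    push_neg at hc
    obtain ⟨⟨i, hi⟩, ⟨j, hj⟩, hij⟩ := Fintype.exists_pair_of_one_lt_card hc
    have hij' : j ∈ Finset.univ.erase i :=
      Finset.mem_erase.2 ⟨fun e => hij (by simp [e]), Finset.mem_univ _⟩
    have hz := Finset.sum_eq_zero_iff_of_nonneg (fun i _ => Finset.sum_nonneg fun j _ =>
      mul_nonneg (hf _) (hf _)) |>.1 h i (Finset.mem_univ i)
    have := (Finset.sum_eq_zero_iff_of_nonneg fun j _ => mul_nonneg (hf i) (hf j)).1 hz j hij'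
    exact hi (by rcases mul_eq_zero.1 this with h' | h'; exact h'; exact absurd h' hj)

theorem stmt15 (n : ℕ) (hn : 1 ≤ n) (Y Z : Matrix (Fin n) (Fin n) ℂ)
    (hY : Y.IsHermitian) (hZ : Z.IsHermitian)
    (h0 : (Y * Z).trace = 0) (heq : (Y * Y).trace = (Z * Z).trace)
    (hpos : 0 < (Y * Y).trace.re)
    (U : Matrix (Fin n) (Fin n) ℂ) (hU : U = Y + Complex.I • Z) :
    (((Y * Z - Z * Y) * (Y * Z - Z * Y)).trace =
        -2 * ((Y * Y).trace * (Z * Z).trace - ((Y * Z).trace) ^ 2)) ↔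
      (U * U = 0 ∧ (U * Uᴴ).rank ≤ 1) := by
  have hU' : Uᴴ = Y - Complex.I • Z := by
    rw [hU]
    simp [conjTranspose_add, conjTranspose_smul, hY.eq, hZ.eq, Complex.conj_I, sub_eq_add_neg,
      neg_smul]
  set B := U * Uᴴ with hBdef
  have hB : B.IsHermitian := isHermitian_mul_conjTranspose_self U
  set lam : Fin n → ℝ := hB.eigenvalues with hlam
  have hlam_nonneg : ∀ i, 0 ≤ lam i := eigenvalues_self_mul_conjTranspose_nonneg U
  -- key trace identity
  have key : (B * B).trace - (U * U * (U * U)ᴴ).trace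
      = -2 * (((Y * Z - Z * Y) * (Y * Z - Z * Y)).trace) := by
    simp only [hBdef, conjTranspose_mul, ← mul_assoc]
    rw [hU', hU]
    exact keyid Y Z
  -- trace of B
  have traceB : B.trace = 2 * (Y * Y).trace := by
    rw [hBdef, hU', hU]
    simp only [mul_sub, add_mul, smul_mul_assoc, mul_smul_comm, smul_smul, Complex.I_mul_I,
      neg_smul, one_smul, trace_add, trace_sub, trace_smul, trace_neg, smul_eq_mul]
    have hI2 : (Complex.I : ℂ) ^ 2 = -1 := Complex.I_sq
    linear_combination Complex.I * (trace_mul_comm Z Y) - (Z * Z).trace * hI2 - heq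
  set c : ℝ := ∑ i, ∑ j, Complex.normSq ((U * U) i j) with hc
  have hc_nonneg : 0 ≤ c :=
    Finset.sum_nonneg fun i _ => Finset.sum_nonneg fun j _ => Complex.normSq_nonneg _
  set X : ℝ := ∑ i, ∑ j ∈ Finset.univ.erase i, lam i * lam j with hX
  have hX_nonneg : 0 ≤ X :=
    Finset.sum_nonneg fun i _ => Finset.sum_nonneg fun j _ =>
      mul_nonneg (hlam_nonneg _) (hlam_nonneg _)
  -- identify both sides
  have sumlam : (2 : ℂ) * (Y * Y).trace = ((∑ i, lam i : ℝ) : ℂ) := by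
    rw [← traceB, trace_eq_sum_eig hB]; push_cast; rfl
  have hBB : (B * B).trace = ((∑ i, (lam i) ^ 2 : ℝ) : ℂ) := by
    rw [trace_sq_eq_sum_eig hB]; push_cast; rfl
  have hCC : (U * U * (U * U)ᴴ).trace = (c : ℂ) := trace_mul_conjT (U * U)
  constructor
  · intro hE
    -- derive real equation
    have hmain : (∑ i, (lam i) ^ 2 : ℝ) - c = (∑ i, lam i) ^ 2 := by
      have h1 : (B * B).trace - (U * U * (U * U)ᴴ).trace = (2 * (Y * Y).trace) ^ 2 := by
        rw [key, hE, h0, ← heq]; ring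
      rw [hBB, hCC, sumlam] at h1
      exact_mod_cast h1
    have hzero : c + X = 0 := by
      have hcs := cross_sum lam
      rw [← hX] at hcs
      linarith [hmain, hcs]
    have hc0 : c = 0 := le_antisymm (by linarith) hc_nonneg
    have hX0 : X = 0 := by linarith
    refine ⟨(normSqSum_eq_zero_iff (U * U)).1 hc0, ?_⟩
    rw [hB.rank_eq_card_non_zero_eigs]
    exact (card_le_one_iff_cross lam hlam_nonneg).2 hX0
  · rintro ⟨hU2, hrank⟩
    have hc0 : c = 0 := (normSqSum_eq_zero_iff (U * U)).2 hU2
    have hX0 : X = 0 := by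
      refine (card_le_one_iff_cross lam hlam_nonneg).1 ?_
      rw [← hB.rank_eq_card_non_zero_eigs]
      exact hrank
    have hmain : (∑ i, (lam i) ^ 2 : ℝ) - c = (∑ i, lam i) ^ 2 := by
      have hcs := cross_sum lam
      rw [← hX] at hcs
      rw [hc0, hcs, hX0]; ring
    have h1 : (B * B).trace - (U * U * (U * U)ᴴ).trace = (2 * (Y * Y).trace) ^ 2 := by
      rw [hBB, hCC, sumlam]
      exact_mod_cast hmain
    rw [key] at h1
    rw [h0, ← heq]
    linear_combination -h1 / 2
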